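/- arXiv:1709.02027 — 8 statements merged into one kernel-verified Lean document; each statement's English description precedes it below -/
import Mathlib

section
/- A subset A of a group G is right piecewise syndetic if and only if there exist a right syndetic set B and a right thick set C such that A = B ∩ C. -/
open Pointwise

def RightThick {G : Type*} [Group G] (A : Set G) : Prop :=
  ∀ F : Finset G, ∃ g : G, ∀ f ∈ F, f * g ∈ A

def RightSyndetic {G : Type*} [Group G] (A : Set G) : Prop :=
  ∃ F : Finset G, (F : Set G) * A = Set.univ

def RightPiecewiseSyndetic {G : Type*} [Group G] (A : Set G) : Prop :=
  ∃ F : Finset G, RightThick ((F : Set G) * A)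

theorem stmt3 {G : Type*} [Group G] (A : Set G) :
    RightPiecewiseSyndetic A ↔
      ∃ B C : Set G, RightSyndetic B ∧ RightThick C ∧ A = B ∩ C := by
  classical
  constructor
  · rintro ⟨F, hF⟩
    set C : Set G := ((insert 1 F : Finset G) : Set G) * A with hCdef
    refine ⟨A ∪ Cᶜ, C, ⟨insert 1 F, ?_⟩, ?_, ?_⟩
    · ext g
      simp only [Set.mem_univ, iff_true]
      by_cases hg : g ∈ C
      · obtain ⟨f, hf, a, ha, rfl⟩ := hg
        exact ⟨f, hf, a, Or.inl ha, rfl⟩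
      · exact ⟨1, by simp, g, Or.inr hg, one_mul g⟩
    · intro E
      obtain ⟨g, hg⟩ := hF E
      refine ⟨g, fun f hf => ?_⟩
      have hsub : ((F : Set G) : Set G) * A ⊆ C := by
        apply Set.mul_subset_mul_right
        intro x hx
        simp only [Finset.coe_insert, Set.mem_insert_iff]
        exact Or.inr hx
      exact hsub (hg f hf)
    · ext a
      constructor
      · intro ha
        refine ⟨Or.inl ha, 1, by simp, a, ha, one_mul a⟩
      · rintro ⟨hab, hac⟩
        rcases hab with h | h
        · exact h
        · exact absurd hac h
  · rintro ⟨B, C, ⟨F, hB⟩, hC, rfl⟩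
    refine ⟨F, fun E => ?_⟩
    obtain ⟨g, hg⟩ := hC (F⁻¹ * E)
    refine ⟨g, fun e he => ?_⟩
    have hmem : e * g ∈ (F : Set G) * B := by rw [hB]; trivial
    obtain ⟨f, hf, b, hb, hfb⟩ := hmem
    have hbeq : b = (f⁻¹ * e) * g := by
      rw [mul_assoc]
      exact eq_inv_mul_iff_mul_eq.mpr hfb
    have hbc : b ∈ C := by
      rw [hbeq]
      exact hg _ (Finset.mul_mem_mul (Finset.inv_mem_inv hf) he)
    exact ⟨f, hf, b, ⟨hb, hbc⟩, hfb⟩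
end

section
/- If a right thick subset A of a group G is partitioned into two sets A₁ and A₂, then at least one of A₁, A₂ is right piecewise syndetic. (Partition regularity of piecewise syndeticity, two-piece case applied to thick sets.) -/
open Pointwise

theorem stmt4 {G : Type*} [Group G] (A A₁ A₂ : Set G)
    (hA : RightThick A) (hunion : A = A₁ ∪ A₂) (hdisj : Disjoint A₁ A₂) :
    RightPiecewiseSyndetic A₁ ∨ RightPiecewiseSyndetic A₂ := by
  classical
  by_cases h1 : RightPiecewiseSyndetic A₁
  · exact Or.inl h1
  · right
    have hnt : ¬ RightThick (((1 : Finset G) : Set G) * A₁) := fun h => h1 ⟨1, h⟩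
    rw [Finset.coe_one, one_mul] at hnt
    unfold RightThick at hnt
    push_neg at hnt
    obtain ⟨H, hH⟩ := hnt
    refine ⟨H⁻¹, ?_⟩
    intro E
    obtain ⟨g, hg⟩ := hA (H * E)
    refine ⟨g, fun e he => ?_⟩
    obtain ⟨h, hh, hne⟩ := hH (e * g)
    have hmem : h * e * g ∈ A := hg _ (Finset.mul_mem_mul hh he)
    have hA2 : h * e * g ∈ A₂ := by
      rw [hunion] at hmem
      rcases hmem with h' | h'
      · exact absurd (by rwa [mul_assoc] at h') hne
      · exact h'
    have := Set.mul_mem_mul (s := (↑(H⁻¹) : Set G)) (t := A₂)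
      (Finset.mem_coe.2 (Finset.inv_mem_inv hh)) hA2
    simpa [mul_assoc] using this
end

section
/- The intersection of two fat subsets of a group G is fat. -/
open Pointwise

open scoped Classical in
lemma ramsey_aux {α : Type*} [DecidableEq α] (r : α → α → Prop) (hsym : Symmetric r)
    (s t : ℕ) : ∃ N : ℕ, ∀ F : Finset α, N ≤ F.card →
    (∃ S : Finset α, S ⊆ F ∧ s ≤ S.card ∧ (S : Set α).Pairwise r) ∨
    (∃ T : Finset α, T ⊆ F ∧ t ≤ T.card ∧ (T : Set α).Pairwise fun x y => ¬ r x y) := by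
  induction s generalizing t with
  | zero =>
    exact ⟨0, fun F _ => Or.inl ⟨∅, Finset.empty_subset F, le_refl 0, by simp⟩⟩
  | succ s ihs =>
    induction t with
    | zero =>
      exact ⟨0, fun F _ => Or.inr ⟨∅, Finset.empty_subset F, le_refl 0, by simp⟩⟩
    | succ t iht =>
      obtain ⟨N1, hN1⟩ := ihs (t + 1)
      obtain ⟨N2, hN2⟩ := iht
      refine ⟨N1 + N2 + 1, fun F hF => ?_⟩
      obtain ⟨x, hx⟩ : F.Nonempty := Finset.card_pos.mp (by omega)
      set F' := F.erase x with hF'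
      have hcard : N1 + N2 ≤ F'.card := by
        rw [hF', Finset.card_erase_of_mem hx]
        omega
      set P := F'.filter (fun y => r x y) with hP
      set Q := F'.filter (fun y => ¬ r x y) with hQ
      have hPQ : P.card + Q.card = F'.card :=
        Finset.card_filter_add_card_filter_not _
      rcases le_or_gt N1 P.card with h1 | h1
      · rcases hN1 P h1 with ⟨S, hS, hSc, hSp⟩ | ⟨T, hT, hTc, hTp⟩
        · -- insert x S
          have hSF' : S ⊆ F' := hS.trans (Finset.filter_subset _ _)
          have hxS : x ∉ S := fun h => (Finset.mem_erase.mp (hSF' h)).1 rfl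
          refine Or.inl ⟨insert x S, ?_, ?_, ?_⟩
          · exact Finset.insert_subset hx (hSF'.trans (Finset.erase_subset _ _))
          · rw [Finset.card_insert_of_notMem hxS]; omega
          · rw [Finset.coe_insert]
            refine Set.Pairwise.insert hSp (fun y hy hxy => ?_)
            have : r x y := (Finset.mem_filter.mp (hS hy)).2
            exact ⟨this, hsym this⟩
        · exact Or.inr ⟨T, hT.trans ((Finset.filter_subset _ _).trans
            (Finset.erase_subset _ _)), hTc, hTp⟩
      · have h2 : N2 ≤ Q.card := by omega
        rcases hN2 Q h2 with ⟨S, hS, hSc, hSp⟩ | ⟨T, hT, hTc, hTp⟩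
        · exact Or.inl ⟨S, hS.trans ((Finset.filter_subset _ _).trans
            (Finset.erase_subset _ _)), hSc, hSp⟩
        · have hTF' : T ⊆ F' := hT.trans (Finset.filter_subset _ _)
          have hxT : x ∉ T := fun h => (Finset.mem_erase.mp (hTF' h)).1 rfl
          refine Or.inr ⟨insert x T, ?_, ?_, ?_⟩
          · exact Finset.insert_subset hx (hTF'.trans (Finset.erase_subset _ _))
          · rw [Finset.card_insert_of_notMem hxT]; omega
          · rw [Finset.coe_insert]
            refine Set.Pairwise.insert hTp (fun y hy hxy => ?_)
            have : ¬ r x y := (Finset.mem_filter.mp (hT hy)).2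
            exact ⟨this, fun h => this (hsym h)⟩

def IsFatWith {G : Type*} [Group G] (m : ℕ) (A : Set G) : Prop :=
  ∀ F : Finset G, F.card = m →
    ∃ D : Finset G, D ⊆ F ∧ D.card = 2 ∧ (D : Set G)⁻¹ * (D : Set G) ⊆ A

def IsFat {G : Type*} [Group G] (A : Set G) : Prop :=
  ∃ m : ℕ, IsFatWith m A

lemma isFatWith_mono {G : Type*} [Group G] {m m' : ℕ} {A : Set G}
    (h : IsFatWith m A) (hm : m ≤ m') : IsFatWith m' A := by
  intro F hF
  obtain ⟨F', hF'sub, hF'card⟩ := Finset.exists_subset_card_eq (s := F) (n := m) (by omega)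
  obtain ⟨D, hD, hDc, hDA⟩ := h F' hF'card
  exact ⟨D, hD.trans hF'sub, hDc, hDA⟩

lemma pair_inv_mul {G : Type*} [Group G] [DecidableEq G] (x y : G) :
    (({x, y} : Finset G) : Set G)⁻¹ * (({x, y} : Finset G) : Set G) =
      {x⁻¹ * x, x⁻¹ * y, y⁻¹ * x, y⁻¹ * y} := by
  ext g
  simp only [Finset.coe_insert, Finset.coe_singleton, Set.mem_mul, Set.mem_inv,
    Set.mem_insert_iff, Set.mem_singleton_iff]
  constructor
  · rintro ⟨a, (ha | ha), b, (hb | hb), rfl⟩ <;>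
      simp_all [inv_eq_iff_eq_inv] <;> tauto
  · rintro (rfl | rfl | rfl | rfl)
    · exact ⟨x⁻¹, Or.inl (by simp), x, Or.inl rfl, rfl⟩
    · exact ⟨x⁻¹, Or.inl (by simp), y, Or.inr rfl, rfl⟩
    · exact ⟨y⁻¹, Or.inr (by simp), x, Or.inl rfl, rfl⟩
    · exact ⟨y⁻¹, Or.inr (by simp), y, Or.inr rfl, rfl⟩

theorem stmt6 {G : Type*} [Group G] (A B : Set G)
    (hA : IsFat A) (hB : IsFat B) : IsFat (A ∩ B) := by
  classical
  obtain ⟨mA₀, hA₀⟩ := hA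
  obtain ⟨mB₀, hB₀⟩ := hB
  set mA := max mA₀ 2 with hmA
  set mB := max mB₀ 2 with hmB
  have hA' : IsFatWith mA A := isFatWith_mono hA₀ (le_max_left _ _)
  have hB' : IsFatWith mB B := isFatWith_mono hB₀ (le_max_left _ _)
  set r : G → G → Prop := fun x y => x⁻¹ * y ∈ A ∧ y⁻¹ * x ∈ A with hr
  have hsym : Symmetric r := fun x y h => ⟨h.2, h.1⟩
  obtain ⟨N, hN⟩ := ramsey_aux r hsym mB mA
  refine ⟨max N mA, fun F hF => ?_⟩
  -- first, 1 ∈ A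
  obtain ⟨FA, hFAsub, hFAcard⟩ :=
    Finset.exists_subset_card_eq (s := F) (n := mA) (by omega)
  obtain ⟨DA, hDAsub, hDAcard, hDAA⟩ := hA' FA hFAcard
  have h1A : (1 : G) ∈ A := by
    obtain ⟨u, v, huv, hDA2⟩ := Finset.card_eq_two.mp hDAcard
    apply hDAA
    rw [hDA2, pair_inv_mul]
    simp
  rcases hN F (by omega) with ⟨S, hSF, hSc, hSp⟩ | ⟨T, hTF, hTc, hTp⟩
  · obtain ⟨S', hS'sub, hS'card⟩ := Finset.exists_subset_card_eq (s := S) (n := mB) hSc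
    obtain ⟨D, hDsub, hDcard, hDB⟩ := hB' S' hS'card
    obtain ⟨x, y, hxy, hD2⟩ := Finset.card_eq_two.mp hDcard
    refine ⟨D, (hDsub.trans hS'sub).trans hSF, hDcard, ?_⟩
    have hxS : x ∈ S := hS'sub (hDsub (by simp [hD2]))
    have hyS : y ∈ S := hS'sub (hDsub (by simp [hD2]))
    have hrxy : r x y := hSp hxS hyS hxy
    intro g hg
    refine ⟨?_, hDB hg⟩
    rw [hD2, pair_inv_mul] at hg
    rcases hg with rfl | rfl | rfl | rfl
    · simpa using h1A
    · exact hrxy.1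
    · exact hrxy.2
    · simpa using h1A
  · obtain ⟨T', hT'sub, hT'card⟩ := Finset.exists_subset_card_eq (s := T) (n := mA) hTc
    obtain ⟨D, hDsub, hDcard, hDA'⟩ := hA' T' hT'card
    obtain ⟨x, y, hxy, hD2⟩ := Finset.card_eq_two.mp hDcard
    have hxT : x ∈ T := hT'sub (hDsub (by simp [hD2]))
    have hyT : y ∈ T := hT'sub (hDsub (by simp [hD2]))
    exfalso
    refine hTp hxT hyT hxy ⟨?_, ?_⟩
    · exact hDA' (by rw [hD2, pair_inv_mul]; simp)
    · exact hDA' (by rw [hD2, pair_inv_mul]; simp)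
end

section
/- Let G be a group and S ⊆ G a subset with e ∉ S and S ∩ (SS ∪ S⁻¹S⁻¹) = ∅. Then G \ S is 3-fat: every 3-element subset {a,b,c} of G contains a two-element subset D with D⁻¹D ⊆ G \ S. -/
open Pointwise

theorem stmt9 {G : Type*} [Group G] (S : Set G) (he : (1 : G) ∉ S)
    (hS : S ∩ (S * S ∪ S⁻¹ * S⁻¹) = ∅) :
    IsFatWith 3 Sᶜ := by
  classical
  have hSS : ∀ x ∈ S, ∀ y ∈ S, x * y ∉ S := by
    intro x hx y hy hxy
    have : x * y ∈ S ∩ (S * S ∪ S⁻¹ * S⁻¹) :=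
      ⟨hxy, Or.inl (Set.mul_mem_mul hx hy)⟩
    rw [hS] at this; exact this
  have hII : ∀ x ∈ S, ∀ y ∈ S, x⁻¹ * y⁻¹ ∉ S := by
    intro x hx y hy hxy
    have : x⁻¹ * y⁻¹ ∈ S ∩ (S * S ∪ S⁻¹ * S⁻¹) :=
      ⟨hxy, Or.inr (Set.mul_mem_mul (Set.inv_mem_inv.mpr hx) (Set.inv_mem_inv.mpr hy))⟩
    rw [hS] at this; exact this
  have key : ∀ x y : G, x ≠ y → x⁻¹ * y ∉ S → y⁻¹ * x ∉ S →
      ∃ D : Finset G, D ⊆ {x, y} ∧ D.card = 2 ∧ (D : Set G)⁻¹ * (D : Set G) ⊆ Sᶜ := by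
    intro x y hxy h1 h2
    refine ⟨{x, y}, le_refl _, Finset.card_pair hxy, ?_⟩
    rintro z ⟨p, hp, q, hq, rfl⟩
    simp only [Finset.coe_insert, Finset.coe_singleton, Set.mem_inv, Set.mem_insert_iff,
      Set.mem_singleton_iff] at hp hq
    rcases hp with hp | hp <;> rcases hq with rfl | rfl <;>
      · subst hp
        simp only [Set.mem_compl_iff, inv_inv]
        first
          | simpa using he
          | simpa using h1
          | simpa using h2
  intro F hF
  obtain ⟨a, b, c, hab, hac, hbc, rfl⟩ := Finset.card_eq_three.mp hF
  have claim : (a⁻¹ * b ∉ S ∧ b⁻¹ * a ∉ S) ∨ (b⁻¹ * c ∉ S ∧ c⁻¹ * b ∉ S) ∨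
      (a⁻¹ * c ∉ S ∧ c⁻¹ * a ∉ S) := by
    by_contra h
    push_neg at h
    obtain ⟨h1, h2, h3⟩ := h
    replace h1 := or_iff_not_imp_left.mpr h1
    replace h2 := or_iff_not_imp_left.mpr h2
    replace h3 := or_iff_not_imp_left.mpr h3
    rcases h1 with hu | hu <;> rcases h2 with hv | hv <;> rcases h3 with hw | hw
    · exact hSS _ hu _ hv (by simpa [mul_assoc] using hw)
    · exact hII _ hv _ hu (by simpa [mul_assoc] using hw)
    · exact hSS _ hw _ hv (by simpa [mul_assoc] using hu)
    · exact hSS _ hw _ hu (by simpa [mul_assoc] using hv)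
    · exact hSS _ hu _ hw (by simpa [mul_assoc] using hv)
    · exact hSS _ hv _ hw (by simpa [mul_assoc] using hu)
    · exact hII _ hu _ hv (by simpa [mul_assoc] using hw)
    · exact hSS _ hv _ hu (by simpa [mul_assoc] using hw)
  rcases claim with ⟨p1, p2⟩ | ⟨p1, p2⟩ | ⟨p1, p2⟩
  · obtain ⟨D, hD1, hD2, hD3⟩ := key a b hab p1 p2
    exact ⟨D, hD1.trans (by intro z hz; simp at hz ⊢; tauto), hD2, hD3⟩
  · obtain ⟨D, hD1, hD2, hD3⟩ := key b c hbc p1 p2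
    exact ⟨D, hD1.trans (by intro z hz; simp at hz ⊢; tauto), hD2, hD3⟩
  · obtain ⟨D, hD1, hD2, hD3⟩ := key a c hac p1 p2
    exact ⟨D, hD1.trans (by intro z hz; simp at hz ⊢; tauto), hD2, hD3⟩
end

section
/- In the free group G on two generators a and b, the set A of all reduced words whose last letter is a is right thick, but A⁻¹A is not fat: for every m there exists an m-element subset F of G (namely {b, b², ..., bᵐ}) such that no two-element subset D of F satisfies D⁻¹D ⊆ A⁻¹A. -/
open Pointwise

section AuxFreeGroup

open FreeGroup

variable {α : Type*} [DecidableEq α]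

private lemma myToWord_mul (x y : FreeGroup α) :
    (x * y).toWord = reduce (x.toWord ++ y.toWord) := by
  rw [show x * y = mk (x.toWord ++ y.toWord) from by rw [← mul_mk, mk_toWord, mk_toWord],
    toWord_mk]

private lemma myReduce_cons_of_head {c d : α × Bool} {M : List (α × Bool)}
    (h : (reduce M).head? = some d) (hcd : ¬ (c.1 = d.1 ∧ c.2 = !d.2)) :
    reduce (c :: M) = c :: reduce M := by
  obtain ⟨t, ht⟩ : ∃ t, reduce M = d :: t := by
    cases hM : reduce M <;> simp_all
  rw [reduce.cons, ht]
  simp [hcd]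

private lemma myReduce_replicate_append {c d : α × Bool} {M : List (α × Bool)}
    (h : (reduce M).head? = some d) (hcd : ¬ (c.1 = d.1 ∧ c.2 = !d.2)) :
    ∀ n, 1 ≤ n → reduce (List.replicate n c ++ M) = List.replicate n c ++ reduce M := by
  intro n hn
  induction n with
  | zero => omega
  | succ n ih =>
    rcases Nat.eq_or_lt_of_le hn with h1 | h1
    · rw [← h1]
      simpa using myReduce_cons_of_head h hcd
    · have hn' : 1 ≤ n := by omega
      have := ih hn'
      rw [List.replicate_succ, List.cons_append,
        myReduce_cons_of_head (d := c)
          (by rw [this]; rcases Nat.exists_eq_add_of_le hn' with ⟨k, rfl⟩;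
              rw [Nat.add_comm]; simp [List.replicate_succ]) (by simp), this]
      simp [List.replicate_succ]

private lemma myHead_reduce_of_length {c : α × Bool} {M : List (α × Bool)} :
    ∀ n, (reduce M).length < n → (reduce (List.replicate n c ++ M)).head? = some c := by
  have key : ∀ n, (reduce (List.replicate n c ++ M)).head? = some c ∨
      (reduce (List.replicate n c ++ M)).length + n ≤ (reduce M).length := by
    intro n
    induction n with
    | zero => right; simp
    | succ n ih =>
      rw [List.replicate_succ, List.cons_append, reduce.cons]
      cases hK : reduce (List.replicate n c ++ M) with
      | nil => left; simp
      | cons d t =>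
        by_cases hc : c.1 = d.1 ∧ c.2 = !d.2
        · rcases ih with ih | ih
          · exfalso
            rw [hK] at ih
            simp at ih
            subst ih
            simp at hc
          · right
            rw [hK] at ih
            simp only [hc, and_self, if_true]
            simp at ih ⊢
            omega
        · left
          simp [hc]
  intro n hn
  rcases key n with h | h
  · exact h
  · omega

private lemma myInvPow (x : α) (n : ℕ) :
    ((of x : FreeGroup α) ^ n)⁻¹ = mk (List.replicate n (x, false)) := by
  rw [show (of x : FreeGroup α) ^ n = mk (List.replicate n (x, true)) from by
    rw [← toWord_of_pow, mk_toWord], inv_mk]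
  congr 1
  simp [invRev]

private lemma myMem_A_iff (w : FreeGroup Bool) :
    w.toWord.getLast? = some (true, true) ↔ (w⁻¹).toWord.head? = some (true, false) := by
  rw [toWord_inv]
  unfold FreeGroup.invRev
  rw [List.head?_reverse, List.getLast?_map]
  cases h : w.toWord.getLast? with
  | none => simp
  | some p => simp [Prod.ext_iff]

private lemma myNotMem (k : ℕ) (hk : 1 ≤ k) :
    (FreeGroup.of false : FreeGroup Bool) ^ k ∉
      {w : FreeGroup Bool | w.toWord.getLast? = some (true, true)}⁻¹ *
      {w : FreeGroup Bool | w.toWord.getLast? = some (true, true)} := by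
  rintro ⟨u, hu, v, hv, huv⟩
  have hu' : u⁻¹ ∈ {w : FreeGroup Bool | w.toWord.getLast? = some (true, true)} :=
    Set.mem_inv.mp hu
  have hvword : (v⁻¹).toWord.head? = some (true, false) := (myMem_A_iff v).mp hv
  have huword : u.toWord.head? = some (true, false) := by
    have := (myMem_A_iff u⁻¹).mp hu'
    rwa [inv_inv] at this
  have hv' : v⁻¹ = mk (List.replicate k (false, false) ++ u.toWord) := by
    have : v = u⁻¹ * (of false : FreeGroup Bool) ^ k := by
      rw [← huv]; group
    rw [this, mul_inv_rev, inv_inv, myInvPow, ← mul_mk, mk_toWord]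
  rw [hv', toWord_mk,
    myReduce_replicate_append (d := (true, false)) (by rw [reduce_toWord]; exact huword)
      (by simp) k hk] at hvword
  rcases Nat.exists_eq_add_of_le hk with ⟨j, rfl⟩
  rw [Nat.add_comm, List.replicate_succ] at hvword
  simp at hvword

end AuxFreeGroup

/-- In the free group on two generators `a = of true`, `b = of false`, the set
`A` of reduced words ending in the letter `a` is right thick, but `A⁻¹ * A` is
not fat: for every `m`, the `m`-element set `{b, b², …, bᵐ}` contains no
two-element subset `D` with `D⁻¹ * D ⊆ A⁻¹ * A`. -/
theorem stmt12 :
    RightThick {w : FreeGroup Bool | w.toWord.getLast? = some (true, true)} ∧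
    ∀ m : ℕ,
      ((Finset.Icc 1 m).image fun i => (FreeGroup.of false : FreeGroup Bool) ^ i).card = m ∧
      ∀ D ⊆ (Finset.Icc 1 m).image fun i => (FreeGroup.of false : FreeGroup Bool) ^ i,
        D.card = 2 →
        ¬ ((D : Set (FreeGroup Bool))⁻¹ * (D : Set (FreeGroup Bool)) ⊆
            {w : FreeGroup Bool | w.toWord.getLast? = some (true, true)}⁻¹ *
            {w : FreeGroup Bool | w.toWord.getLast? = some (true, true)}) := by
  constructor
  · -- right thick
    intro F
    set N : ℕ := (F.sup fun f => f.toWord.length) + 1 with hN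
    refine ⟨FreeGroup.of false ^ N * FreeGroup.of true, fun f hf => ?_⟩
    show (f * (FreeGroup.of false ^ N * FreeGroup.of true)).toWord.getLast? = some (true, true)
    rw [myMem_A_iff]
    have hrw : (f * (FreeGroup.of false ^ N * FreeGroup.of true))⁻¹ =
        FreeGroup.mk ((true, false) :: (List.replicate N (false, false) ++ (f⁻¹).toWord)) := by
      rw [mul_inv_rev, mul_inv_rev, myInvPow, show ((FreeGroup.of true : FreeGroup Bool))⁻¹ =
          FreeGroup.mk [(true, false)] from by simpa using myInvPow true 1,
        show ((true, false) :: (List.replicate N ((false : Bool), false) ++ (f⁻¹).toWord))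
          = ([((true : Bool), false)] ++ List.replicate N ((false : Bool), false))
            ++ (f⁻¹).toWord from by simp,
        ← FreeGroup.mul_mk, ← FreeGroup.mul_mk, FreeGroup.mk_toWord]
    rw [hrw, FreeGroup.toWord_mk]
    have hlen : (FreeGroup.reduce (f⁻¹).toWord).length < N := by
      rw [FreeGroup.reduce_toWord, FreeGroup.toWord_inv, FreeGroup.invRev_length]
      have : f.toWord.length ≤ F.sup fun f => f.toWord.length :=
        Finset.le_sup (f := fun f : FreeGroup Bool => f.toWord.length) hf
      omega
    have h1 : (FreeGroup.reduce (List.replicate N ((false : Bool), false) ++ (f⁻¹).toWord)).head?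
        = some (false, false) := myHead_reduce_of_length N hlen
    rw [myReduce_cons_of_head h1 (by simp)]
    simp
  · intro m
    constructor
    · have hinj : Function.Injective (fun i : ℕ => (FreeGroup.of false : FreeGroup Bool) ^ i) := by
        intro i j hij
        have := congrArg (fun w : FreeGroup Bool => w.toWord.length) hij
        simpa [FreeGroup.toWord_of_pow] using this
      rw [Finset.card_image_of_injective _ hinj, Nat.card_Icc]
      omega
    · intro D hD hcard hsub
      obtain ⟨x, y, hxy, rfl⟩ := Finset.card_eq_two.mp hcard
      have hxD : x ∈ Finset.image (fun i => (FreeGroup.of false : FreeGroup Bool) ^ i)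
          (Finset.Icc 1 m) := hD (Finset.mem_insert_self _ _)
      have hyD : y ∈ Finset.image (fun i => (FreeGroup.of false : FreeGroup Bool) ^ i)
          (Finset.Icc 1 m) := hD (Finset.mem_insert_of_mem (Finset.mem_singleton_self _))
      obtain ⟨i, hi, hx⟩ := Finset.mem_image.mp hxD
      obtain ⟨j, hj, hy⟩ := Finset.mem_image.mp hyD
      have hij : i ≠ j := by
        intro h; apply hxy; rw [← hx, ← hy, h]
      have main : ∀ p q : ℕ, p < q →
          (FreeGroup.of false : FreeGroup Bool) ^ p ∈ ({x, y} : Finset (FreeGroup Bool)) →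
          (FreeGroup.of false : FreeGroup Bool) ^ q ∈ ({x, y} : Finset (FreeGroup Bool)) →
          False := by
        intro p q hpq hp hq
        obtain ⟨k, hk1, rfl⟩ : ∃ k, 1 ≤ k ∧ q = p + k := ⟨q - p, by omega, by omega⟩
        apply myNotMem k hk1
        have heq : ((FreeGroup.of false : FreeGroup Bool) ^ p)⁻¹ *
            (FreeGroup.of false : FreeGroup Bool) ^ (p + k)
            = (FreeGroup.of false : FreeGroup Bool) ^ k := by
          rw [pow_add, inv_mul_cancel_left]
        rw [← heq]
        exact hsub (Set.mul_mem_mul (Set.inv_mem_inv.mpr (Finset.mem_coe.mpr hp))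
          (Finset.mem_coe.mpr hq))
      rcases Nat.lt_or_ge i j with h | h
      · exact main i j h (by rw [hx]; simp) (by rw [hy]; simp)
      · exact main j i (by omega) (by rw [hy]; simp) (by rw [hx]; simp)
end

section
/- Let X be a set and B(X) the free Boolean group on X, identified with the finite subsets of X under symmetric difference. If w₁, ..., w_k ∈ B(X) with k ≠ 4 (k ≥ 2) and wᵢ Δ wⱼ has exactly 2 elements for all i < j ≤ k, then there exist x₁, ..., x_k ∈ X such that wᵢ Δ wⱼ = {xᵢ, xⱼ} for all i < j ≤ k. -/
open scoped symmDiff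

private lemma stmt17_inter_singleton {X : Type*} [DecidableEq X] {s t : Finset X}
    (hs : s.card = 2) (ht : t.card = 2) (hst : (s ∆ t).card = 2) :
    ∃ p, s ∩ t = {p} := by
  have h1 : (s ∪ t).card + (s ∩ t).card = s.card + t.card := Finset.card_union_add_card_inter s t
  have h2 : s ∆ t = (s ∪ t) \ (s ∩ t) := symmDiff_eq_sup_sdiff_inf s t
  have h3 : (s ∩ t) ⊆ (s ∪ t) := Finset.inter_subset_union
  have h4 : (s ∆ t).card = (s ∪ t).card - (s ∩ t).card := by rw [h2, Finset.card_sdiff_of_subset h3]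
  have : (s ∩ t).card = 1 := by omega
  exact Finset.card_eq_one.mp this

private lemma stmt17_pair_symmDiff' {X : Type*} [DecidableEq X] {p a b : X}
    (ha : a ≠ p) (hb : b ≠ p) (hab : a ≠ b) :
    ({p, a} : Finset X) ∆ {p, b} = {a, b} := by
  ext x
  simp only [Finset.mem_symmDiff, Finset.mem_insert, Finset.mem_singleton]
  constructor
  · rintro (⟨h1, h2⟩ | ⟨h1, h2⟩) <;> tauto
  · rintro (rfl | rfl) <;> tauto

private lemma stmt17_eq_pair {X : Type*} [DecidableEq X] {s : Finset X} {p a : X}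
    (hs : s.card = 2) (hp : p ∈ s) (ha : a ∈ s) (hpa : p ≠ a) : s = {p, a} := by
  symm
  apply Finset.eq_of_subset_of_card_le
  · intro x hx
    simp only [Finset.mem_insert, Finset.mem_singleton] at hx
    rcases hx with rfl | rfl <;> assumption
  · rw [hs, Finset.card_insert_of_notMem (by simpa using hpa), Finset.card_singleton]

/-- In the free Boolean group on `X` (finite subsets of `X` under symmetric
difference), if `k ≠ 4`, `k ≥ 2`, and all pairwise symmetric differences of
`w 1, …, w k` are two-element sets, then there exist `x i ∈ X` with
`w i ∆ w j = {x i, x j}` for all `i < j`. -/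
theorem stmt17 {X : Type*} [DecidableEq X] (k : ℕ) (hk : 2 ≤ k) (hk4 : k ≠ 4)
    (w : Fin k → Finset X)
    (h : ∀ i j : Fin k, i < j → (w i ∆ w j).card = 2) :
    ∃ x : Fin k → X, ∀ i j : Fin k, i < j → w i ∆ w j = {x i, x j} := by
  classical
  set i0 : Fin k := ⟨0, by omega⟩ with hi0
  set i1 : Fin k := ⟨1, by omega⟩ with hi1
  have hsym : ∀ i j : Fin k, i ≠ j → (w i ∆ w j).card = 2 := by
    intro i j hij
    rcases lt_or_gt_of_ne hij with hlt | hgt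
    · exact h i j hlt
    · rw [symmDiff_comm]; exact h j i hgt
  set A : Fin k → Finset X := fun j => w i0 ∆ w j with hA
  have hAij : ∀ i j : Fin k, A i ∆ A j = w i ∆ w j := by
    intro i j
    ext x
    simp only [hA, Finset.mem_symmDiff]
    tauto
  have hne0 : ∀ j : Fin k, j ≠ i0 ↔ (j : ℕ) ≠ 0 := by
    intro j; simp [Fin.ext_iff, hi0]
  have hcard : ∀ j : Fin k, j ≠ i0 → (A j).card = 2 := by
    intro j hj
    exact hsym i0 j (Ne.symm hj)
  have hAcard : ∀ i j : Fin k, i ≠ i0 → j ≠ i0 → i ≠ j → (A i ∆ A j).card = 2 := by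
    intro i j _ _ hij
    rw [hAij]; exact hsym i j hij
  have hkey : ∃ p, ∀ j, j ≠ i0 → p ∈ A j := by
    by_cases hk2 : k = 2
    · have hne : (A i1).Nonempty := by
        rw [← Finset.card_pos, hcard i1 (by rw [hne0]; simp [hi1])]; omega
      obtain ⟨p, hp⟩ := hne
      refine ⟨p, fun j hj => ?_⟩
      have hj1 : j = i1 := by
        rw [hne0] at hj
        have hlt := j.isLt
        exact Fin.ext (show (j : ℕ) = 1 by omega)
      rwa [hj1]
    · have hk3 : 3 ≤ k := by omega
      set i2 : Fin k := ⟨2, by omega⟩ with hi2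
      have h1ne : i1 ≠ i0 := by rw [hne0]; simp [hi1]
      have h2ne : i2 ≠ i0 := by rw [hne0]; simp [hi2]
      have h12 : i1 ≠ i2 := Fin.ne_of_val_ne (show (1:ℕ) ≠ 2 by omega)
      obtain ⟨p, hp12⟩ := stmt17_inter_singleton (hcard i1 h1ne) (hcard i2 h2ne)
        (hAcard i1 i2 h1ne h2ne h12)
      have hpmem : p ∈ A i1 ∩ A i2 := by rw [hp12]; simp
      have hp1 : p ∈ A i1 := (Finset.mem_inter.mp hpmem).1
      have hp2 : p ∈ A i2 := (Finset.mem_inter.mp hpmem).2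
      refine ⟨p, fun m hm0 => ?_⟩
      by_contra hpm
      have hm1 : m ≠ i1 := fun e => hpm (e ▸ hp1)
      have hm2 : m ≠ i2 := fun e => hpm (e ▸ hp2)
      have hmval : 3 ≤ (m : ℕ) := by
        rw [hne0] at hm0
        have e1 : (m : ℕ) ≠ 1 := fun e => hm1 (Fin.ext e)
        have e2 : (m : ℕ) ≠ 2 := fun e => hm2 (Fin.ext e)
        omega
      have hk5 : 5 ≤ k := by have := m.isLt; omega
      set nv : ℕ := if (m : ℕ) = 3 then 4 else 3 with hnv
      set n : Fin k := ⟨nv, by rw [hnv]; split <;> omega⟩ with hn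
      have hnval : (n : ℕ) = nv := rfl
      have hn0 : n ≠ i0 := by rw [hne0, hnval, hnv]; split <;> omega
      have hn1 : n ≠ i1 := Fin.ne_of_val_ne (show nv ≠ (1:ℕ) by rw [hnv]; split <;> omega)
      have hn2 : n ≠ i2 := Fin.ne_of_val_ne (show nv ≠ (2:ℕ) by rw [hnv]; split <;> omega)
      have hnm : n ≠ m := Fin.ne_of_val_ne (show nv ≠ (m:ℕ) by rw [hnv]; split <;> omega)
      obtain ⟨a, ham⟩ := stmt17_inter_singleton (hcard m hm0) (hcard i1 h1ne)
        (hAcard m i1 hm0 h1ne hm1)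
      obtain ⟨b, hbm⟩ := stmt17_inter_singleton (hcard m hm0) (hcard i2 h2ne)
        (hAcard m i2 hm0 h2ne hm2)
      have hamem : a ∈ A m ∩ A i1 := by rw [ham]; simp
      have hbmem : b ∈ A m ∩ A i2 := by rw [hbm]; simp
      have haAm : a ∈ A m := (Finset.mem_inter.mp hamem).1
      have haA1 : a ∈ A i1 := (Finset.mem_inter.mp hamem).2
      have hbAm : b ∈ A m := (Finset.mem_inter.mp hbmem).1
      have hbA2 : b ∈ A i2 := (Finset.mem_inter.mp hbmem).2
      have hap : a ≠ p := fun e => hpm (e ▸ haAm)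
      have hbp : b ≠ p := fun e => hpm (e ▸ hbAm)
      have hab : a ≠ b := by
        intro e
        have : a ∈ A i1 ∩ A i2 := Finset.mem_inter.mpr ⟨haA1, e ▸ hbA2⟩
        rw [hp12, Finset.mem_singleton] at this
        exact hap this
      have hA1eq : A i1 = {p, a} := stmt17_eq_pair (hcard i1 h1ne) hp1 haA1 (Ne.symm hap)
      have hA2eq : A i2 = {p, b} := stmt17_eq_pair (hcard i2 h2ne) hp2 hbA2 (Ne.symm hbp)
      have hAmeq : A m = {a, b} := stmt17_eq_pair (hcard m hm0) haAm hbAm hab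
      have neq : ∀ j : Fin k, j ≠ i0 → n ≠ j → A n ≠ A j := by
        intro j hj hnj e
        have := hAcard n j hn0 hj hnj
        rw [e, symmDiff_self] at this
        simp at this
      by_cases hpn : p ∈ A n
      · obtain ⟨c, hcm⟩ := stmt17_inter_singleton (hcard n hn0) (hcard m hm0)
          (hAcard n m hn0 hm0 hnm)
        have hcmem : c ∈ A n ∩ A m := by rw [hcm]; simp
        have hcn : c ∈ A n := (Finset.mem_inter.mp hcmem).1
        have hcAm : c ∈ A m := (Finset.mem_inter.mp hcmem).2
        rw [hAmeq, Finset.mem_insert, Finset.mem_singleton] at hcAm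
        rcases hcAm with rfl | rfl
        · exact neq i1 h1ne hn1
            (by rw [hA1eq]; exact stmt17_eq_pair (hcard n hn0) hpn hcn (Ne.symm hap))
        · exact neq i2 h2ne hn2
            (by rw [hA2eq]; exact stmt17_eq_pair (hcard n hn0) hpn hcn (Ne.symm hbp))
      · obtain ⟨c, hc1⟩ := stmt17_inter_singleton (hcard n hn0) (hcard i1 h1ne)
          (hAcard n i1 hn0 h1ne hn1)
        obtain ⟨d, hd2⟩ := stmt17_inter_singleton (hcard n hn0) (hcard i2 h2ne)
          (hAcard n i2 hn0 h2ne hn2)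
        have hcmem : c ∈ A n ∩ A i1 := by rw [hc1]; simp
        have hdmem : d ∈ A n ∩ A i2 := by rw [hd2]; simp
        have hcn : c ∈ A n := (Finset.mem_inter.mp hcmem).1
        have hcA1 : c ∈ A i1 := (Finset.mem_inter.mp hcmem).2
        have hdn : d ∈ A n := (Finset.mem_inter.mp hdmem).1
        have hdA2 : d ∈ A i2 := (Finset.mem_inter.mp hdmem).2
        rw [hA1eq, Finset.mem_insert, Finset.mem_singleton] at hcA1
        rcases hcA1 with rfl | rfl
        · exact hpn hcn
        rw [hA2eq, Finset.mem_insert, Finset.mem_singleton] at hdA2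
        rcases hdA2 with rfl | rfl
        · exact hpn hdn
        exact neq m hm0 hnm (by rw [hAmeq]; exact stmt17_eq_pair (hcard n hn0) hcn hdn hab)
  obtain ⟨p, hp⟩ := hkey
  have hq : ∀ j : Fin k, j ≠ i0 → ∃ q, (A j).erase p = {q} := by
    intro j hj
    apply Finset.card_eq_one.mp
    rw [Finset.card_erase_of_mem (hp j hj), hcard j hj]
  choose q hqspec using hq
  set x : Fin k → X := fun j => if hj : j = i0 then p else q j hj with hx
  have hAeq : ∀ j (hj : j ≠ i0), A j = {p, x j} := by
    intro j hj
    have hins : insert p ((A j).erase p) = A j := Finset.insert_erase (hp j hj)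
    rw [hx]; simp only [dif_neg hj]
    rw [← hins, hqspec j hj]
  have hxp : ∀ j (hj : j ≠ i0), x j ≠ p := by
    intro j hj
    have : x j ∈ (A j).erase p := by
      rw [hqspec j hj, hx]; simp [dif_neg hj]
    exact Finset.ne_of_mem_erase this
  refine ⟨x, fun i j hij => ?_⟩
  have hjne : j ≠ i0 := by
    rw [hne0]
    have : (i : ℕ) < (j : ℕ) := hij
    omega
  by_cases hi : i = i0
  · subst hi
    have hxi0 : x i0 = p := by rw [hx]; simp
    have hwA : w i0 ∆ w j = A j := rfl
    rw [hwA, hAeq j hjne, hxi0]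
  · rw [← hAij i j, hAeq i hi, hAeq j hjne]
    have hxij : x i ≠ x j := by
      intro e
      have hAeqij : A i = A j := by rw [hAeq i hi, hAeq j hjne, e]
      have h2 := hAcard i j hi hjne (Fin.ne_of_lt hij)
      rw [hAeqij, symmDiff_self] at h2
      simp at h2
    exact stmt17_pair_symmDiff' (hxp i hi) (hxp j hjne) hxij
end

section
/- Let X be a set and B(X) the group of finite subsets of X under symmetric difference. If w₁, w₂, w₃, w₄ ∈ B(X) satisfy |wᵢ Δ wⱼ| = 2 for all i < j ≤ 4, then either (a) there exist x₁, x₂, x₃, x₄ ∈ X with wᵢ Δ wⱼ = {xᵢ, xⱼ} for all i < j, or (b) w₄ = w₁ Δ w₂ Δ w₃ and there exist x₁, x₂, x₃ ∈ X with w₁ Δ w₄ = w₂ Δ w₃ = {x₂, x₃}, w₂ Δ w₄ = w₁ Δ w₃ = {x₁, x₃}, and w₃ Δ w₄ = w₁ Δ w₂ = {x₁, x₂}. -/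
open scoped symmDiff

private lemma inter_card_one {X : Type*} [DecidableEq X] {A B : Finset X}
    (hA : A.card = 2) (hB : B.card = 2) (hAB : (A ∆ B).card = 2) : (A ∩ B).card = 1 := by
  have h1 : A ∆ B = (A \ B) ∪ (B \ A) := by ext z; simp [Finset.mem_symmDiff]
  have hd : Disjoint (A \ B) (B \ A) := by simp [Finset.disjoint_left]; tauto
  have h2 := Finset.card_union_of_disjoint hd
  have h3 := Finset.card_sdiff_add_card_inter A B
  have h4 := Finset.card_sdiff_add_card_inter B A
  rw [Finset.inter_comm] at h4
  rw [h1, h2] at hAB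
  omega

private lemma pair_of_mem {X : Type*} [DecidableEq X] {A : Finset X} (h : A.card = 2)
    {x : X} (hx : x ∈ A) : ∃ y, y ≠ x ∧ A = {x, y} := by
  obtain ⟨u, v, huv, rfl⟩ := Finset.card_eq_two.mp h
  rcases Finset.mem_insert.mp hx with rfl | hx
  · exact ⟨v, fun e => huv e.symm, rfl⟩
  · simp only [Finset.mem_singleton] at hx
    subst hx
    exact ⟨u, huv, Finset.pair_comm u x⟩

private lemma eq_pair {X : Type*} [DecidableEq X] {A : Finset X} (h : A.card = 2)
    {a b : X} (ha : a ∈ A) (hb : b ∈ A) (hab : a ≠ b) : A = {a, b} := by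
  obtain ⟨y, hy, rfl⟩ := pair_of_mem h ha
  simp only [Finset.mem_insert, Finset.mem_singleton] at hb
  rcases hb with rfl | rfl
  · exact absurd rfl hab
  · rfl

private lemma sd_pair {X : Type*} [DecidableEq X] {p a b : X}
    (hpa : p ≠ a) (hpb : p ≠ b) (hab : a ≠ b) :
    ({p, a} : Finset X) ∆ {p, b} = {a, b} := by
  ext z
  simp only [Finset.mem_symmDiff, Finset.mem_insert, Finset.mem_singleton]
  constructor
  · rintro (⟨(rfl | rfl), h⟩ | ⟨(rfl | rfl), h⟩) <;> tauto
  · rintro (rfl | rfl)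
    · exact Or.inl ⟨Or.inr rfl, by rintro (rfl | rfl) <;> tauto⟩
    · exact Or.inr ⟨Or.inr rfl, by rintro (rfl | rfl) <;> tauto⟩

theorem stmt18 {X : Type*} [DecidableEq X] (w : Fin 4 → Finset X)
    (h : ∀ i j : Fin 4, i < j → (w i ∆ w j).card = 2) :
    (∃ x : Fin 4 → X, ∀ i j : Fin 4, i < j → w i ∆ w j = {x i, x j}) ∨
    (w 3 = w 0 ∆ w 1 ∆ w 2 ∧
      ∃ x₁ x₂ x₃ : X,
        w 0 ∆ w 3 = w 1 ∆ w 2 ∧ w 1 ∆ w 2 = ({x₂, x₃} : Finset X) ∧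
        w 1 ∆ w 3 = w 0 ∆ w 2 ∧ w 0 ∆ w 2 = ({x₁, x₃} : Finset X) ∧
        w 2 ∆ w 3 = w 0 ∆ w 1 ∧ w 0 ∆ w 1 = ({x₁, x₂} : Finset X)) := by
  classical
  set v : Fin 4 → Finset X := fun i => w 0 ∆ w i with hv
  have hvw : ∀ i j : Fin 4, v i ∆ v j = w i ∆ w j := by
    intro i j; ext z; simp only [hv, Finset.mem_symmDiff]; tauto
  have h01 := h 0 1 (by decide)
  have h02 := h 0 2 (by decide)
  have h03 := h 0 3 (by decide)
  have h12 := h 1 2 (by decide)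
  have h13 := h 1 3 (by decide)
  have h23 := h 2 3 (by decide)
  have hc1 : (v 1).card = 2 := h01
  have hc2 : (v 2).card = 2 := h02
  have hc3 : (v 3).card = 2 := h03
  have hv12 : (v 1 ∆ v 2).card = 2 := by rw [hvw]; exact h12
  have hv13 : (v 1 ∆ v 3).card = 2 := by rw [hvw]; exact h13
  have hv23 : (v 2 ∆ v 3).card = 2 := by rw [hvw]; exact h23
  obtain ⟨b, hb⟩ := Finset.card_eq_one.mp (inter_card_one hc1 hc2 hv12)
  obtain ⟨a, ha⟩ := Finset.card_eq_one.mp (inter_card_one hc1 hc3 hv13)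
  have hb1 : b ∈ v 1 := (Finset.mem_inter.mp (hb ▸ Finset.mem_singleton_self b)).1
  have hb2 : b ∈ v 2 := (Finset.mem_inter.mp (hb ▸ Finset.mem_singleton_self b)).2
  have ha1 : a ∈ v 1 := (Finset.mem_inter.mp (ha ▸ Finset.mem_singleton_self a)).1
  have ha3 : a ∈ v 3 := (Finset.mem_inter.mp (ha ▸ Finset.mem_singleton_self a)).2
  by_cases hab : a = b
  · -- sunflower case
    subst hab
    obtain ⟨x1, hx1a, hV1⟩ := pair_of_mem hc1 ha1
    obtain ⟨x2, hx2a, hV2⟩ := pair_of_mem hc2 hb2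
    obtain ⟨x3, hx3a, hV3⟩ := pair_of_mem hc3 ha3
    have hne12 : x1 ≠ x2 := by
      intro e; rw [hV1, hV2, e, symmDiff_self] at hv12; simp at hv12
    have hne13 : x1 ≠ x3 := by
      intro e; rw [hV1, hV3, e, symmDiff_self] at hv13; simp at hv13
    have hne23 : x2 ≠ x3 := by
      intro e; rw [hV2, hV3, e, symmDiff_self] at hv23; simp at hv23
    left
    refine ⟨![a, x1, x2, x3], ?_⟩
    have e01 : w 0 ∆ w 1 = {a, x1} := hV1
    have e02 : w 0 ∆ w 2 = {a, x2} := hV2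
    have e03 : w 0 ∆ w 3 = {a, x3} := hV3
    have e12 : w 1 ∆ w 2 = {x1, x2} := by
      rw [← hvw, hV1, hV2, sd_pair (fun e => hx1a e.symm) (fun e => hx2a e.symm) hne12]
    have e13 : w 1 ∆ w 3 = {x1, x3} := by
      rw [← hvw, hV1, hV3, sd_pair (fun e => hx1a e.symm) (fun e => hx3a e.symm) hne13]
    have e23 : w 2 ∆ w 3 = {x2, x3} := by
      rw [← hvw, hV2, hV3, sd_pair (fun e => hx2a e.symm) (fun e => hx3a e.symm) hne23]
    intro i j hij
    fin_cases i <;> fin_cases j <;>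
      first
      | exact absurd hij (by decide)
      | exact e01 | exact e02 | exact e03 | exact e12 | exact e13 | exact e23
  · -- triangle case
    have hV1 : v 1 = {a, b} := eq_pair hc1 ha1 hb1 hab
    obtain ⟨c, hcb, hV2⟩ := pair_of_mem hc2 hb2
    have hca : c ≠ a := by
      intro e
      subst e
      have : c ∈ v 1 ∩ v 2 := Finset.mem_inter.mpr ⟨ha1, by rw [hV2]; simp⟩
      rw [hb] at this
      simp at this
      exact hab this
    obtain ⟨d, hda, hV3⟩ := pair_of_mem hc3 ha3
    obtain ⟨e, he⟩ := Finset.card_eq_one.mp (inter_card_one hc2 hc3 hv23)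
    have he2 : e ∈ v 2 := (Finset.mem_inter.mp (he ▸ Finset.mem_singleton_self e)).1
    have he3 : e ∈ v 3 := (Finset.mem_inter.mp (he ▸ Finset.mem_singleton_self e)).2
    have hdb : d ≠ b := by
      intro hdb
      have hvv : v 3 = v 1 := by rw [hV3, hV1, hdb]
      rw [hvv, symmDiff_comm, symmDiff_self] at hv13
      simp at hv13
    have hV3' : v 3 = {a, c} := by
      rw [hV2] at he2; rw [hV3] at he3
      simp only [Finset.mem_insert, Finset.mem_singleton] at he2 he3
      rcases he2 with rfl | rfl
      · rcases he3 with rfl | rfl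
        · exact absurd rfl hab
        · exact absurd rfl hdb
      · rcases he3 with rfl | rfl
        · exact absurd rfl hca
        · exact hV3
    -- symmetric difference computations
    have e01 : w 0 ∆ w 1 = {a, b} := hV1
    have e02 : w 0 ∆ w 2 = {b, c} := hV2
    have e03 : w 0 ∆ w 3 = {a, c} := hV3'
    have e12 : w 1 ∆ w 2 = {a, c} := by
      rw [← hvw, hV1, hV2, Finset.pair_comm a b,
        sd_pair (Ne.symm hab) (fun e => hcb e.symm) (Ne.symm hca)]
    have e13 : w 1 ∆ w 3 = {b, c} := by
      rw [← hvw, hV1, hV3', sd_pair hab (Ne.symm hca) (Ne.symm hcb)]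
    have e23 : w 2 ∆ w 3 = {b, a} := by
      rw [← hvw, hV2, hV3', Finset.pair_comm b c, Finset.pair_comm a c, sd_pair hcb hca (Ne.symm hab)]
    right
    constructor
    · -- w 3 = w 0 ∆ w 1 ∆ w 2
      have key : w 0 ∆ w 3 = w 0 ∆ (w 0 ∆ w 1 ∆ w 2) := by
        rw [symmDiff_assoc, symmDiff_symmDiff_cancel_left, e03, e12]
      exact symmDiff_right_injective (w 0) key
    · exact ⟨b, a, c, by rw [e03, e12], e12, by rw [e13, e02], e02,
        by rw [e23, e01, Finset.pair_comm], by rw [e01, Finset.pair_comm]⟩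
end

section
/- For any Δ*-set A in a Boolean group G with zero 0, there exists a subset B ⊆ G with |B| = |A| such that (B + B) ⊆ A ∪ {0}. -/
open Pointwise

universe u

open Cardinal Set

namespace EDM

open scoped Classical

variable {V : Type u}

/-- `H` is red-homogeneous for the relation `R`. -/
def Tame (R : V → V → Prop) (H : Set V) : Prop :=
  ∀ x ∈ H, ∀ y ∈ H, x ≠ y → R x y

/-- the "blue neighborhood" of `x`. -/
def nb (R : V → V → Prop) (x : V) : Set V := {y | ¬ R x y}

theorem tame_mono {R : V → V → Prop} {H H' : Set V} (h : H' ⊆ H) (hH : Tame R H) :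
    Tame R H' := fun x hx y hy hxy => hH x (h hx) y (h hy) hxy

/-- any cardinal below the size of a set is realized by a subset -/
theorem shrink (s : Set V) {c : Cardinal.{u}} (hc : c ≤ #s) : ∃ t ⊆ s, #t = c := by
  obtain ⟨p, hp⟩ := Cardinal.le_mk_iff_exists_set.1 hc
  refine ⟨Subtype.val '' p, by rintro x ⟨y, _, rfl⟩; exact y.2, ?_⟩
  rw [Cardinal.mk_image_eq Subtype.val_injective, hp]

section Seq

variable {R : V → V → Prop}
  (hseq : ∀ g : ℕ → V, Function.Injective g → ∃ m n : ℕ, m < n ∧ R (g m) (g n))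

include hseq in
/-- Lemma 1 : inside any infinite set there is a full-size subset all of whose
relative blue degrees are small. -/
theorem exists_small_degrees (S : Set V) (hS : ℵ₀ ≤ #S) :
    ∃ T ⊆ S, #T = #S ∧ ∀ x ∈ T, #(nb R x ∩ T : Set V) < #S := by
  by_contra hcon
  push_neg at hcon
  -- every full-size subset contains a point of full blue degree
  have key : ∀ T : Set V, T ⊆ S → #T = #S →
      ∃ x ∈ T, #(nb R x ∩ T : Set V) = #S := by
    intro T hTS hT
    obtain ⟨x, hxT, hx⟩ := hcon T hTS hT
    exact ⟨x, hxT, le_antisymm (hT ▸ Cardinal.mk_le_mk_of_subset inter_subset_right) hx⟩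
  classical
  let K := {T : Set V // T ⊆ S ∧ #T = #S}
  have step : ∀ T : K, ∃ p : V × K, p.1 ∈ T.1 ∧ p.2.1 ⊆ T.1 ∧
      ∀ y ∈ p.2.1, ¬ R p.1 y ∧ y ≠ p.1 := by
    rintro ⟨T, hTS, hT⟩
    obtain ⟨x, hxT, hx⟩ := key T hTS hT
    refine ⟨⟨x, ⟨(nb R x ∩ T) \ {x}, ?_, ?_⟩⟩, hxT, ?_, ?_⟩
    · exact fun y hy => hTS (hy.1.2)
    · -- cardinality is preserved after deleting one point
      apply le_antisymm
      · exact hT ▸ Cardinal.mk_le_mk_of_subset (fun y hy => hy.1.2)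
      · by_contra hlt
        push_neg at hlt
        have h1 : #(nb R x ∩ T : Set V) ≤ #(((nb R x ∩ T) \ {x} : Set V)) + #({x} : Set V) :=
          Cardinal.le_mk_diff_add_mk _ _
        rw [Cardinal.mk_singleton] at h1
        have : #(nb R x ∩ T : Set V) < #S :=
          lt_of_le_of_lt h1 (Cardinal.add_lt_of_lt hS hlt (lt_of_lt_of_le Cardinal.one_lt_aleph0 hS))
        exact absurd hx this.ne
    · exact fun y hy => hy.1.2
    · exact fun y hy => ⟨hy.1.1, hy.2⟩
  choose pick hpick using step
  let F : ℕ → K := fun n => Nat.rec ⟨S, subset_rfl, rfl⟩ (fun _ T => (pick T).2) n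
  have hFsucc : ∀ n, F (n + 1) = (pick (F n)).2 := fun n => rfl
  set g : ℕ → V := fun n => (pick (F n)).1 with hg
  have hmono : ∀ m n, m ≤ n → (F n).1 ⊆ (F m).1 := by
    intro m n hmn
    induction n with
    | zero => simp_all
    | succ k ih =>
      rcases Nat.lt_or_ge m (k+1) with h | h
      · exact fun x hx => ih (Nat.lt_succ_iff.1 h) ((hpick (F k)).2.1 hx)
      · have : m = k + 1 := le_antisymm hmn h
        subst this; exact fun x hx => hx
  have hblue : ∀ m n, m < n → ¬ R (g m) (g n) ∧ g n ≠ g m := by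
    intro m n hmn
    have h1 : g n ∈ (F n).1 := (hpick (F n)).1
    have h2 : (F n).1 ⊆ (F (m+1)).1 := hmono _ _ hmn
    have h3 : g n ∈ (pick (F m)).2.1 := by rw [← hFsucc]; exact h2 h1
    exact (hpick (F m)).2.2 _ h3
  have hinj : Function.Injective g := by
    intro a b hab
    by_contra hne
    rcases Nat.lt_or_ge a b with h | h
    · exact (hblue a b h).2 hab.symm
    · exact (hblue b a (lt_of_le_of_ne h (Ne.symm hne))).2 hab
  obtain ⟨m, n, hmn, hR⟩ := hseq g hinj
  exact (hblue m n hmn).1 hR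

variable (hsymm : Symmetric R)

include hsymm in
/-- Maximal red subset of `S`, via Zorn. -/
theorem exists_maximal_tame (S : Set V) :
    ∃ M ⊆ S, Tame R M ∧ ∀ x ∈ S, x ∉ M → ∃ m ∈ M, x ∈ nb R m := by
  obtain ⟨M, hM⟩ := zorn_subset {H : Set V | H ⊆ S ∧ Tame R H} (by
    intro c hc hchain
    refine ⟨⋃₀ c, ⟨?_, ?_⟩, fun s hs => subset_sUnion_of_mem hs⟩
    · exact sUnion_subset fun s hs => (hc hs).1
    · intro x hx y hy hxy
      obtain ⟨s, hs, hxs⟩ := hx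
      obtain ⟨t, ht, hyt⟩ := hy
      rcases hchain.total hs ht with hst | hts
      · exact (hc ht).2 x (hst hxs) y hyt hxy
      · exact (hc hs).2 x hxs y (hts hyt) hxy)
  obtain ⟨⟨hMS, hMt⟩, hmax⟩ := hM
  refine ⟨M, hMS, hMt, ?_⟩
  intro x hxS hxM
  by_contra hno
  push_neg at hno
  -- then `insert x M` is tame, contradicting maximality
  have htame : Tame R (insert x M) := by
    intro a ha b hb hab
    rcases ha with rfl | ha
    · rcases hb with rfl | hb
      · exact absurd rfl hab
      · by_contra hR
        exact (hno b hb) (fun h => hR (hsymm h))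
    · rcases hb with rfl | hb
      · by_contra hR
        exact (hno a ha) hR
      · exact hMt a ha b hb hab
  have := hmax (y := insert x M) ⟨insert_subset hxS hMS, htame⟩ (subset_insert x M)
  exact hxM (this (mem_insert x M))

include hseq hsymm in
/-- Lemma : for regular `δ`, any set of size `δ` contains a red set of size `δ`. -/
theorem exists_tame_regular {δ : Cardinal.{u}} (hδ : δ.IsRegular) (S : Set V)
    (hS : #S = δ) : ∃ H ⊆ S, Tame R H ∧ #H = δ := by
  obtain ⟨T, hTS, hT, hdeg⟩ := exists_small_degrees hseq S (hS ▸ hδ.aleph0_le)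
  rw [hS] at hT hdeg
  obtain ⟨M, hMT, hMt, hMmax⟩ := exists_maximal_tame (R := R) hsymm T
  refine ⟨M, hMT.trans hTS, hMt, ?_⟩
  have hMle : #M ≤ δ := hT ▸ Cardinal.mk_le_mk_of_subset hMT
  rcases lt_or_eq_of_le hMle with hMlt | hMeq
  · exfalso
    have hcover : T ⊆ M ∪ ⋃ m ∈ M, (nb R m ∩ T) := by
      intro x hx
      by_cases hxM : x ∈ M
      · exact Or.inl hxM
      · obtain ⟨m, hm, hnb⟩ := hMmax x hx hxM
        exact Or.inr (mem_biUnion hm ⟨hnb, hx⟩)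
    have h1 : #(⋃ m ∈ M, (nb R m ∩ T) : Set V) < δ := by
      refine lt_of_le_of_lt (Cardinal.mk_biUnion_le _ _) ?_
      refine Cardinal.mul_lt_of_lt hδ.aleph0_le hMlt ?_
      exact Cardinal.iSup_lt_of_isRegular hδ hMlt fun m => hdeg m.1 (hMT m.2)
    have h2 : #T ≤ #M + #(⋃ m ∈ M, (nb R m ∩ T) : Set V) :=
      le_trans (Cardinal.mk_le_mk_of_subset hcover) (Cardinal.mk_union_le _ _)
    rw [hT] at h2
    exact absurd h2 (not_le.2 (Cardinal.add_lt_of_lt hδ.aleph0_le hMlt h1))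
  · exact hMeq

omit hseq hsymm in
/-- Many points of bounded degree (used in the singular case). -/
theorem exists_many_small_degree (T : Set V)
    (hdeg : ∀ x ∈ T, #(nb R x ∩ T : Set V) < #T) (hinf : ℵ₀ ≤ #T)
    (hcof : (#T).ord.cof < #T) {ρ : Cardinal.{u}} (hρ : ρ < #T) :
    ∃ γ < #T, ρ ≤ #({x ∈ T | #(nb R x ∩ T : Set V) ≤ γ} : Set V) := by
  by_contra hcon
  push_neg at hcon
  obtain ⟨ι, f, hlsub, hι⟩ := Ordinal.exists_lsub_cof (#T).ord
  have hflt : ∀ i, f i < (#T).ord := fun i => hlsub ▸ Ordinal.lt_lsub f i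
  have hcards : ∀ i, (f i).card < #T := fun i => Cardinal.lt_ord.1 (hflt i)
  have hcover : T ⊆ ⋃ i : ι, ({x ∈ T | #(nb R x ∩ T : Set V) ≤ (f i).card} : Set V) := by
    intro x hx
    have h1 : (#(nb R x ∩ T : Set V)).ord < (#T).ord := Cardinal.ord_lt_ord.2 (hdeg x hx)
    have h2 : ∃ i, (#(nb R x ∩ T : Set V)).ord ≤ f i := by
      by_contra hno
      push_neg at hno
      have := Ordinal.lsub_le fun i => hno i
      rw [hlsub] at this
      exact absurd this (not_le.2 h1)
    obtain ⟨i, hi⟩ := h2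
    have h3 : #(nb R x ∩ T : Set V) ≤ (f i).card := by
      have := Ordinal.card_le_card hi
      rwa [Cardinal.card_ord] at this
    exact mem_iUnion.2 ⟨i, hx, h3⟩
  set ρ' := max ρ ℵ₀ with hρ'
  have hρ'lt : ρ' < #T := max_lt hρ (lt_of_le_of_ne hinf ?ne)
  case ne =>
    intro h
    rw [← h] at hcof
    exact absurd hcof (not_lt.2 (by simpa [← h] using Cardinal.isRegular_aleph0.2))
  have h4 : #T ≤ #ι * ⨆ i, #({x ∈ T | #(nb R x ∩ T : Set V) ≤ (f i).card} : Set V) :=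
    le_trans (Cardinal.mk_le_mk_of_subset hcover) (Cardinal.mk_iUnion_le _)
  have h5 : (⨆ i, #({x ∈ T | #(nb R x ∩ T : Set V) ≤ (f i).card} : Set V)) ≤ ρ' :=
    ciSup_le' fun i => le_of_lt (lt_of_lt_of_le (hcon _ (hcards i)) (le_max_left _ _))
  have h6 : #ι * ⨆ i, #({x ∈ T | #(nb R x ∩ T : Set V) ≤ (f i).card} : Set V) < #T := by
    refine Cardinal.mul_lt_of_lt hinf ?_ (lt_of_le_of_lt h5 hρ'lt)
    rw [hι]; exact hcof
  exact absurd h4 (not_le.2 h6)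

end Seq

/-- the invariant maintained along the transfinite construction in the singular case. -/
def Good (R : V → V → Prop) (T : Set V) (pf : Ordinal.{u} → Cardinal.{u}) (k : Cardinal.{u})
    (o : Ordinal.{u}) (prev : Ordinal.{u} → Set V × Cardinal.{u}) (p : Set V × Cardinal.{u}) :
    Prop :=
  (∀ o' < o, (prev o').1 ⊆ p.1) ∧ p.1 ⊆ T ∧ Tame R p.1 ∧
    (∀ x ∈ p.1, #(nb R x ∩ T : Set V) ≤ p.2) ∧ p.2 < k ∧
    (∀ o' < o, (prev o').2 ≤ p.2) ∧ #p.1 < k ∧ pf o ≤ #p.1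

theorem good_congr {R : V → V → Prop} {T : Set V} {pf : Ordinal.{u} → Cardinal.{u}}
    {k : Cardinal.{u}} {o : Ordinal.{u}} {prev prev' : Ordinal.{u} → Set V × Cardinal.{u}}
    (h : ∀ o' < o, prev o' = prev' o') {p : Set V × Cardinal.{u}}
    (hg : Good R T pf k o prev p) : Good R T pf k o prev' p := by
  obtain ⟨h1, h2, h3, h4, h5, h6, h7, h8⟩ := hg
  exact ⟨fun o' ho' => (h o' ho') ▸ h1 o' ho', h2, h3, h4, h5,
    fun o' ho' => (h o' ho') ▸ h6 o' ho', h7, h8⟩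

/-- the transfinite construction. -/
noncomputable def chainF (R : V → V → Prop) (T : Set V) (pf : Ordinal.{u} → Cardinal.{u})
    (k : Cardinal.{u}) : Ordinal.{u} → Set V × Cardinal.{u} :=
  WellFounded.fix Ordinal.lt_wf fun o ih =>
    if h : ∃ p, Good R T pf k o (fun o' => if h' : o' < o then ih o' h' else (∅, 0)) p
    then h.choose else (∅, 0)

theorem chainF_eq (R : V → V → Prop) (T : Set V) (pf : Ordinal.{u} → Cardinal.{u})
    (k : Cardinal.{u}) (o : Ordinal.{u}) :
    chainF R T pf k o =
      if h : ∃ p, Good R T pf k o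
          (fun o' => if _ : o' < o then chainF R T pf k o' else (∅, 0)) p
      then h.choose else (∅, 0) :=
  WellFounded.fix_eq _ _ _

theorem chainF_good {R : V → V → Prop} {T : Set V} {pf : Ordinal.{u} → Cardinal.{u}}
    {k : Cardinal.{u}} {o : Ordinal.{u}}
    (hex : ∃ p, Good R T pf k o (chainF R T pf k) p) :
    Good R T pf k o (chainF R T pf k) (chainF R T pf k o) := by
  obtain ⟨p0, hp0⟩ := hex
  have hex' : ∃ p, Good R T pf k o
      (fun o' => if _ : o' < o then chainF R T pf k o' else (∅, 0)) p :=
    ⟨p0, good_congr (prev := chainF R T pf k)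
      (prev' := fun o' => if _ : o' < o then chainF R T pf k o' else (∅, 0))
      (fun o' ho' => by simp only [dif_pos ho']) hp0⟩
  rw [chainF_eq, dif_pos hex']
  exact good_congr (prev := fun o' => if _ : o' < o then chainF R T pf k o' else (∅, 0))
    (prev' := chainF R T pf k) (fun o' ho' => by simp only [dif_pos ho']) hex'.choose_spec

section Singular

variable {R : V → V → Prop}
  (hseq : ∀ g : ℕ → V, Function.Injective g → ∃ m n : ℕ, m < n ∧ R (g m) (g n))
  (hsymm : Symmetric R)

include hseq hsymm in
theorem exists_tame_singular (hinf : ℵ₀ ≤ #V)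
    (hcof : (#V).ord.cof < (#V : Cardinal.{u})) :
    ∃ H : Set V, Tame R H ∧ #H = #V := by
  classical
  set κ := (#V : Cardinal.{u}) with hκdef
  obtain ⟨T, -, hT, hdeg⟩ := exists_small_degrees hseq (univ : Set V) (by rwa [mk_univ])
  rw [mk_univ] at hT hdeg
  rw [← hκdef] at hT hdeg
  have hnotreg : ¬ κ.IsRegular := fun h => absurd hcof (not_lt.2 h.2)
  have haleph0lt : ℵ₀ < κ :=
    lt_of_le_of_ne hinf fun h => hnotreg (h ▸ Cardinal.isRegular_aleph0)
  set lam := κ.ord.cof with hlam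
  have hlamlt : lam < κ := hcof
  -- a cofinal family in `κ.ord`
  obtain ⟨ι, f, hlsub, hι⟩ := Ordinal.exists_lsub_cof κ.ord
  have hflt : ∀ i, f i < κ.ord := fun i => hlsub ▸ Ordinal.lt_lsub f i
  have hfcof : ∀ a < κ.ord, ∃ i, a ≤ f i := by
    intro a ha
    by_contra hno
    push_neg at hno
    exact absurd (hlsub ▸ Ordinal.lsub_le fun i => hno i) (not_le.2 ha)
  -- a bijection between `Iio lam.ord` and `ι`
  have hmkι : #(lam.ord.ToType) = #ι := by
    rw [Cardinal.mk_toType, Cardinal.card_ord, hι]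
  obtain ⟨etyp⟩ := Cardinal.eq.1 hmkι
  set ebij : Set.Iio lam.ord ≃ ι := (Ordinal.ToType.mk (o := lam.ord)).toEquiv.trans etyp
    with hebij
  set pf : Ordinal.{u} → Cardinal.{u} := fun o =>
    if h : o < lam.ord then (f (ebij ⟨o, h⟩)).card else 0 with hpf
  have hpflt : ∀ o, pf o < κ := by
    intro o
    rw [hpf]
    dsimp only
    split
    · exact Cardinal.lt_ord.1 (hflt _)
    · exact lt_of_le_of_lt (Cardinal.zero_le _) haleph0lt
  set F := chainF R T pf κ with hF
  -- the main invariant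
  have main : ∀ o : Ordinal.{u}, o < lam.ord → Good R T pf κ o F (F o) := by
    intro o
    induction o using Ordinal.induction with
    | _ o IH =>
    intro ho
    have hIH : ∀ o' (h : o' < o), Good R T pf κ o' F (F o') :=
      fun o' h => IH o' h (h.trans ho)
    -- the union of the previously constructed sets
    set U : Set V := ⋃ o' : Set.Iio o, (F o'.1).1 with hU
    have hUnested : ∀ o' (h : o' < o), (F o').1 ⊆ U :=
      fun o' h x hx => mem_iUnion.2 ⟨⟨o', h⟩, hx⟩
    have hUsub : U ⊆ T := iUnion_subset fun o' => (hIH o'.1 o'.2).2.1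
    have hUtame : Tame R U := by
      intro x hx y hy hxy
      obtain ⟨⟨o1, h1⟩, hx1⟩ := mem_iUnion.1 hx
      obtain ⟨⟨o2, h2⟩, hy2⟩ := mem_iUnion.1 hy
      rcases lt_trichotomy o1 o2 with h12 | h12 | h12
      · exact (hIH o2 h2).2.2.1 x ((hIH o2 h2).1 o1 h12 hx1) y hy2 hxy
      · exact (hIH o2 h2).2.2.1 x (h12 ▸ hx1) y hy2 hxy
      · exact (hIH o1 h1).2.2.1 x hx1 y ((hIH o1 h1).1 o2 h12 hy2) hxy
    have hidx : #(o.ToType) < lam := by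
      rw [Cardinal.mk_toType]
      exact Cardinal.lt_ord.1 ho
    have hU2 : U = ⋃ j : o.ToType, (F ((Ordinal.ToType.mk (o := o)).symm j).1).1 := by
      ext x
      simp only [hU, mem_iUnion]
      constructor
      · rintro ⟨o', hx⟩
        refine ⟨Ordinal.ToType.mk (o := o) o', ?_⟩
        rwa [OrderIso.symm_apply_apply]
      · rintro ⟨j, hx⟩
        exact ⟨_, hx⟩
    have hUcard : #U < κ := by
      rw [hU2]
      refine lt_of_le_of_lt (Cardinal.mk_iUnion_le _) ?_
      refine Cardinal.mul_lt_of_lt hinf (hidx.trans hlamlt) ?_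
      exact Ordinal.iSup_lt (by rwa [← hlam])
        fun j => (hIH _ ((Ordinal.ToType.mk (o := o)).symm j).2).2.2.2.2.2.2.1
    set gam0 : Cardinal.{u} := ⨆ j : o.ToType, (F ((Ordinal.ToType.mk (o := o)).symm j).1).2
      with hgam0
    have hgam0lt : gam0 < κ :=
      Ordinal.iSup_lt (by rwa [← hlam])
        fun j => (hIH _ ((Ordinal.ToType.mk (o := o)).symm j).2).2.2.2.2.1
    have hgamprev : ∀ o' (h : o' < o), (F o').2 ≤ gam0 := by
      intro o' h
      have := le_ciSup (Cardinal.bddAbove_range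
        (fun j : o.ToType => (F ((Ordinal.ToType.mk (o := o)).symm j).1).2))
        (Ordinal.ToType.mk (o := o) ⟨o', h⟩)
      rwa [OrderIso.symm_apply_apply] at this
    have hUdeg : ∀ x ∈ U, #(nb R x ∩ T : Set V) ≤ gam0 := by
      intro x hx
      obtain ⟨⟨o1, h1⟩, hx1⟩ := mem_iUnion.1 hx
      exact le_trans ((hIH o1 h1).2.2.2.1 x hx1) (hgamprev o1 h1)
    set Rem : Set V := ⋃ x ∈ U, (nb R x ∩ T) with hRemdef
    have hRem : #Rem < κ := by
      refine lt_of_le_of_lt (Cardinal.mk_biUnion_le _ _) ?_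
      refine Cardinal.mul_lt_of_lt hinf hUcard ?_
      exact lt_of_le_of_lt (ciSup_le' fun x => hUdeg x.1 x.2) hgam0lt
    set base : Cardinal.{u} := ((#U ⊔ #Rem) ⊔ (pf o ⊔ gam0)) ⊔ ℵ₀ with hbasedef
    have hbase : base < κ :=
      max_lt (max_lt (max_lt hUcard hRem) (max_lt (hpflt o) hgam0lt)) haleph0lt
    have hUbase : #U ≤ base := le_sup_left.trans (le_sup_left.trans le_sup_left)
    have hRembase : #Rem ≤ base := le_sup_right.trans (le_sup_left.trans le_sup_left)
    have hpfbase : pf o ≤ base := le_sup_left.trans (le_sup_right.trans le_sup_left)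
    have hgambase : gam0 ≤ base := le_sup_right.trans (le_sup_right.trans le_sup_left)
    set δ := Order.succ base with hδdef
    have hbaseδ : base < δ := Order.lt_succ base
    have hδreg : δ.IsRegular := Cardinal.isRegular_succ (le_sup_right)
    have hδκ : δ < κ :=
      lt_of_le_of_ne (Order.succ_le_of_lt hbase) fun h => hnotreg (h ▸ hδreg)
    -- a large set of small degree
    obtain ⟨gam1, hgam1, hbig⟩ := exists_many_small_degree (R := R) T
      (by rwa [hT]) (by rwa [hT]) (by rwa [hT]) (ρ := δ) (by rwa [hT])
    rw [hT] at hgam1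
    set gam := gam1 ⊔ gam0 with hgamdef
    have hgamκ : gam < κ := max_lt hgam1 hgam0lt
    set T₁ : Set V := {x ∈ T | #(nb R x ∩ T : Set V) ≤ gam} with hT₁def
    have hT₁ : δ ≤ #T₁ := by
      refine le_trans hbig (Cardinal.mk_le_mk_of_subset ?_)
      exact fun x hx => ⟨hx.1, le_trans hx.2 le_sup_left⟩
    set S₀ : Set V := T₁ \ (U ∪ Rem) with hS₀def
    have hS₀ : δ ≤ #S₀ := by
      by_contra hlt
      push_neg at hlt
      have h1 : #T₁ ≤ #S₀ + #((U ∪ Rem : Set V)) := Cardinal.le_mk_diff_add_mk _ _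
      have h2 : #((U ∪ Rem : Set V)) < δ := by
        refine lt_of_le_of_lt (Cardinal.mk_union_le _ _) ?_
        refine Cardinal.add_lt_of_lt hδreg.aleph0_le ?_ ?_
        · exact lt_of_le_of_lt hUbase hbaseδ
        · exact lt_of_le_of_lt hRembase hbaseδ
      have h3 : #T₁ < δ :=
        lt_of_le_of_lt h1 (Cardinal.add_lt_of_lt hδreg.aleph0_le hlt h2)
      exact absurd hT₁ (not_le.2 h3)
    obtain ⟨S₁, hS₁sub, hS₁⟩ := shrink S₀ hS₀
    obtain ⟨H', hH'sub, hH't, hH'card⟩ := exists_tame_regular hseq hsymm hδreg S₁ hS₁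
    -- the new pair
    have hex : ∃ p, Good R T pf κ o F p := by
      refine ⟨(U ∪ H', gam), ?_, ?_, ?_, ?_, hgamκ, ?_, ?_, ?_⟩
      · exact fun o' h => (hUnested o' h).trans subset_union_left
      · refine union_subset hUsub ?_
        intro x hx
        exact ((hS₁sub (hH'sub hx)).1).1
      · -- tameness
        intro x hx y hy hxy
        have cross : ∀ u ∈ U, ∀ z ∈ H', R u z := by
          intro u hu z hz
          have hzS₀ : z ∈ S₀ := hS₁sub (hH'sub hz)
          have hznotRem : z ∉ Rem := fun h => hzS₀.2 (Or.inr h)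
          by_contra hR
          exact hznotRem (mem_biUnion hu ⟨hR, hzS₀.1.1⟩)
        rcases hx with hx | hx
        · rcases hy with hy | hy
          · exact hUtame x hx y hy hxy
          · exact cross x hx y hy
        · rcases hy with hy | hy
          · exact hsymm (cross y hy x hx)
          · exact hH't x hx y hy hxy
      · -- degrees
        intro x hx
        rcases hx with hx | hx
        · exact le_trans (hUdeg x hx) le_sup_right
        · exact (hS₁sub (hH'sub hx)).1.2
      · exact fun o' h => le_trans (hgamprev o' h) le_sup_right
      · refine lt_of_le_of_lt (Cardinal.mk_union_le _ _) ?_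
        exact Cardinal.add_lt_of_lt hinf hUcard (hH'card ▸ hδκ)
      · refine le_trans ?_ (Cardinal.mk_le_mk_of_subset (subset_union_right (s := U)))
        rw [hH'card]
        exact le_of_lt (lt_of_le_of_lt hpfbase hbaseδ)
    exact chainF_good hex
  -- the union of the chain
  set Hfin : Set V := ⋃ o' : Set.Iio lam.ord, (F o'.1).1 with hHfin
  have hHtame : Tame R Hfin := by
    intro x hx y hy hxy
    obtain ⟨⟨o1, h1⟩, hx1⟩ := mem_iUnion.1 hx
    obtain ⟨⟨o2, h2⟩, hy2⟩ := mem_iUnion.1 hy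
    rcases lt_trichotomy o1 o2 with h12 | h12 | h12
    · exact (main o2 h2).2.2.1 x ((main o2 h2).1 o1 h12 hx1) y hy2 hxy
    · exact (main o2 h2).2.2.1 x (h12 ▸ hx1) y hy2 hxy
    · exact (main o1 h1).2.2.1 x hx1 y ((main o1 h1).1 o2 h12 hy2) hxy
  refine ⟨Hfin, hHtame, ?_⟩
  refine le_antisymm (Cardinal.mk_set_le _) ?_
  by_contra hlt
  push_neg at hlt
  set μ := Order.succ ((#Hfin) ⊔ ℵ₀) with hμdef
  have hμreg : μ.IsRegular := Cardinal.isRegular_succ le_sup_right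
  have hμκ : μ < κ :=
    lt_of_le_of_ne (Order.succ_le_of_lt (max_lt hlt haleph0lt))
      fun h => hnotreg (h ▸ hμreg)
  obtain ⟨i, hi⟩ := hfcof μ.ord (Cardinal.ord_lt_ord.2 hμκ)
  set o : Ordinal.{u} := (ebij.symm i).1 with hodef
  have ho : o < lam.ord := (ebij.symm i).2
  have hpfo : μ ≤ pf o := by
    rw [hpf]
    dsimp only
    rw [dif_pos ho]
    have h1 : ebij ⟨o, ho⟩ = i := by
      have h0 : (⟨o, ho⟩ : Set.Iio lam.ord) = ebij.symm i := Subtype.ext rfl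
      rw [h0, Equiv.apply_symm_apply]
    rw [h1]
    have := Ordinal.card_le_card hi
    rwa [Cardinal.card_ord] at this
  have hblock : (F o).1 ⊆ Hfin := fun x hx => mem_iUnion.2 ⟨⟨o, ho⟩, hx⟩
  have h2 : μ ≤ #Hfin :=
    le_trans hpfo (le_trans (main o ho).2.2.2.2.2.2.2 (Cardinal.mk_le_mk_of_subset hblock))
  have h3 : #Hfin < μ := lt_of_le_of_lt le_sup_left (Order.lt_succ _)
  exact absurd h2 (not_le.2 h3)

include hseq hsymm in
theorem exists_tame_full [Infinite V] : ∃ H : Set V, Tame R H ∧ #H = #V := by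
  by_cases hreg : (#V : Cardinal.{u}).IsRegular
  · obtain ⟨H, -, ht, hc⟩ := exists_tame_regular hseq hsymm hreg (univ : Set V)
      (by rw [mk_univ])
    exact ⟨H, ht, hc⟩
  · have hinf : ℵ₀ ≤ #V := Cardinal.infinite_iff.1 ‹Infinite V›
    have hcof : (#V).ord.cof < #V :=
      lt_of_le_of_ne (Ordinal.cof_ord_le _) fun h => hreg ⟨hinf, h.ge⟩
    exact exists_tame_singular hseq hsymm hinf hcof

end Singular


end EDM

/-- For any Δ*-set `A` in an infinite Boolean group `G`, there is `B ⊆ G` with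
`|B| = |A|` and `B + B ⊆ A ∪ {0}`. -/
theorem stmt19 {G : Type*} [AddCommGroup G] [Infinite G]
    (hbool : ∀ g : G, g + g = 0) (A : Set G)
    (hA : ∀ g : ℕ → G, Function.Injective g → ∃ m n : ℕ, m < n ∧ g m + g n ∈ A) :
    ∃ B : Set G, Cardinal.mk B = Cardinal.mk A ∧ B + B ⊆ A ∪ {0} := by
  classical
  set R : G → G → Prop := fun x y => x + y ∈ A with hR
  have hsymm : Symmetric R := fun x y h => by
    show y + x ∈ A
    rw [add_comm]
    exact h
  have hseq : ∀ g : ℕ → G, Function.Injective g → ∃ m n : ℕ, m < n ∧ R (g m) (g n) := hA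
  obtain ⟨H, hHt, hHc⟩ := EDM.exists_tame_full hseq hsymm
  have hAle : Cardinal.mk A ≤ Cardinal.mk H := by
    rw [hHc]
    exact Cardinal.mk_set_le A
  obtain ⟨B, hBH, hBc⟩ := EDM.shrink H hAle
  refine ⟨B, hBc, ?_⟩
  rw [Set.add_subset_iff]
  intro x hx y hy
  by_cases hxy : x = y
  · subst hxy
    rw [hbool x]
    exact Or.inr rfl
  · exact Or.inl (hHt x (hBH hx) y (hBH hy) hxy)
end
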